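/- Let n ≥ 1 and let ψ : (Fin n → Fin 2) → ℂ be defined by ψ = ∑_{i<j} R_{i,j}. Let a : Fin n → Fin 4 be such that a(i) ∈ {1, 2} (an X or Y factor) for at least one i. Then |⟨ψ, P_a·ψ⟩| ≤ n³. -/

import Mathlib

open Matrix

/-- The four single-qubit Pauli matrices `I, X, Y, Z`. -/
noncomputable def pauli : Fin 4 → Matrix (Fin 2) (Fin 2) ℂ :=
  ![1, !![0, 1; 1, 0], !![0, -Complex.I; Complex.I, 0], !![1, 0; 0, -1]]

/-- The `n`-qubit Pauli string `P_a = σ_{a 0} ⊗ ⋯ ⊗ σ_{a (n-1)}`. -/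
noncomputable def PauliString {n : ℕ} (a : Fin n → Fin 4) :
    Matrix (Fin n → Fin 2) (Fin n → Fin 2) ℂ :=
  Matrix.of fun x y => ∏ i, pauli (a i) (x i) (y i)

/-- The single-qubit state `|R⟩ = (|0⟩ + e^{iπ/8}|1⟩)/√2`. -/
noncomputable def Rvec : Fin 2 → ℂ :=
  ![1 / (Real.sqrt 2 : ℂ), Complex.exp (Real.pi * Complex.I / 8) / (Real.sqrt 2 : ℂ)]

/-- The product state with `|R⟩` in positions `i` and `j` and `|0⟩` elsewhere. -/
noncomputable def Rij {n : ℕ} (i j : Fin n) : (Fin n → Fin 2) → ℂ :=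
  fun x => Rvec (x i) * Rvec (x j) *
    ∏ k, if k = i ∨ k = j then 1 else (if x k = 0 then 1 else 0)

/-- The unnormalized state `ψ = ∑_{i<j} R_{i,j}`. -/
noncomputable def psiM {n : ℕ} : (Fin n → Fin 2) → ℂ :=
  fun x => ∑ i, ∑ j, if i < j then Rij i j x else 0

noncomputable def e0' : Fin 2 → ℂ := fun s => if s = 0 then 1 else 0

noncomputable def vOf {n : ℕ} (i j m : Fin n) : Fin 2 → ℂ :=
  if m = i ∨ m = j then Rvec else e0'

noncomputable def Gfac (k : Fin 4) (u w : Fin 2 → ℂ) : ℂ :=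
  ∑ s, ∑ t, (starRingEnd ℂ) (u s) * (pauli k s t * w t)

lemma e0_norm : ‖e0' 0‖ ^ 2 + ‖e0' 1‖ ^ 2 ≤ 1 := by
  simp [e0']

lemma Rvec_norm : ‖Rvec 0‖ ^ 2 + ‖Rvec 1‖ ^ 2 ≤ 1 := by
  simp [Rvec, Complex.norm_exp, map_div₀]
  norm_num

lemma vOf_norm {n : ℕ} (i j m : Fin n) :
    ‖vOf i j m 0‖ ^ 2 + ‖vOf i j m 1‖ ^ 2 ≤ 1 := by
  unfold vOf
  split
  · exact Rvec_norm
  · exact e0_norm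

lemma Gfac_abs_le (k : Fin 4) (u w : Fin 2 → ℂ)
    (hu : ‖u 0‖ ^ 2 + ‖u 1‖ ^ 2 ≤ 1)
    (hw : ‖w 0‖ ^ 2 + ‖w 1‖ ^ 2 ≤ 1) :
    ‖Gfac k u w‖ ≤ 1 := by
  have h0 : (0:ℝ) ≤ ‖u 0‖ := norm_nonneg _
  have h1 : (0:ℝ) ≤ ‖u 1‖ := norm_nonneg _
  have h2 : (0:ℝ) ≤ ‖w 0‖ := norm_nonneg _
  have h3 : (0:ℝ) ≤ ‖w 1‖ := norm_nonneg _
  fin_cases k <;>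
    simp only [Gfac, Fin.sum_univ_two, pauli] <;>
    simp [Matrix.one_apply, mul_comm] <;>
    calc ‖_‖ ≤ _ := norm_add_le _ _
      _ ≤ 1 := by
        simp only [norm_neg, norm_mul, Complex.norm_conj, Complex.norm_I, one_mul]
        nlinarith [sq_nonneg (‖u 0‖ - ‖w 0‖),
          sq_nonneg (‖u 1‖ - ‖w 1‖),
          sq_nonneg (‖u 0‖ - ‖w 1‖),
          sq_nonneg (‖u 1‖ - ‖w 0‖)]

lemma Gfac_zero (k : Fin 4) (hk : k = 1 ∨ k = 2) : Gfac k e0' e0' = 0 := by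
  rcases hk with h | h <;> subst h <;> simp [Gfac, e0', pauli, Fin.sum_univ_two]

lemma Rij_eq_prod {n : ℕ} (i j : Fin n) (hij : i ≠ j) (x : Fin n → Fin 2) :
    Rij i j x = ∏ m, vOf i j m (x m) := by
  have split : ∀ m : Fin n, vOf i j m (x m)
      = (if m = i ∨ m = j then Rvec (x m) else 1) * (if m = i ∨ m = j then 1 else e0' (x m)) := by
    intro m
    by_cases h : m = i ∨ m = j <;> simp [vOf, h]
  rw [Finset.prod_congr rfl (fun m _ => split m), Finset.prod_mul_distrib]
  have h1 : (∏ m, (if m = i ∨ m = j then Rvec (x m) else 1)) = Rvec (x i) * Rvec (x j) := by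
    rw [← Finset.prod_subset (Finset.subset_univ ({i, j} : Finset (Fin n)))
      (by intro m _ hm; simp only [Finset.mem_insert, Finset.mem_singleton] at hm; push_neg at hm
          simp [hm.1, hm.2])]
    rw [Finset.prod_pair hij]
    simp
  rw [h1]
  unfold Rij
  congr 1

lemma sum_prod_pi {n : ℕ} (g : Fin n → Fin 2 → ℂ) :
    ∑ x : Fin n → Fin 2, ∏ m, g m (x m) = ∏ m, ∑ s, g m s := by
  rw [Finset.prod_univ_sum, Fintype.piFinset_univ]

lemma T_eq {n : ℕ} (a : Fin n → Fin 4) (i j k l : Fin n) (hij : i ≠ j) (hkl : k ≠ l) :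
    (∑ x, ∑ y, (starRingEnd ℂ) (Rij i j x) * (PauliString a x y * Rij k l y))
      = ∏ m, Gfac (a m) (vOf i j m) (vOf k l m) := by
  have step1 : ∀ x : Fin n → Fin 2,
      (∑ y, (starRingEnd ℂ) (Rij i j x) * (PauliString a x y * Rij k l y))
        = ∏ m, ((starRingEnd ℂ) (vOf i j m (x m)) * ∑ t, pauli (a m) (x m) t * vOf k l m t) := by
    intro x
    have : ∀ y, (starRingEnd ℂ) (Rij i j x) * (PauliString a x y * Rij k l y)
        = ∏ m, ((starRingEnd ℂ) (vOf i j m (x m)) * (pauli (a m) (x m) (y m) * vOf k l m (y m))) := by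
      intro y
      rw [Rij_eq_prod i j hij x, Rij_eq_prod k l hkl y, map_prod]
      simp only [PauliString, Matrix.of_apply]
      rw [← Finset.prod_mul_distrib, ← Finset.prod_mul_distrib]
    rw [Finset.sum_congr rfl (fun y _ => this y)]
    rw [sum_prod_pi (fun m t => (starRingEnd ℂ) (vOf i j m (x m)) * (pauli (a m) (x m) t * vOf k l m t))]
    refine Finset.prod_congr rfl fun m _ => ?_
    rw [Finset.mul_sum]
  rw [Finset.sum_congr rfl (fun x _ => step1 x)]
  rw [sum_prod_pi (fun m s => (starRingEnd ℂ) (vOf i j m s) * ∑ t, pauli (a m) s t * vOf k l m t)]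
  refine Finset.prod_congr rfl fun m _ => ?_
  unfold Gfac
  rw [Finset.sum_congr rfl (fun s _ => Finset.mul_sum _ _ _)]


/-- if the Pauli string `P_a` contains at least one `X` or `Y`
factor, then `|⟨ψ, P_a ψ⟩| ≤ n³` for `ψ = ∑_{i<j} R_{i,j}`. -/
theorem psiM_pauli_expectation_bound
    {n : ℕ} (hn : 1 ≤ n) (a : Fin n → Fin 4)
    (ha : ∃ i, a i = 1 ∨ a i = 2) :
    ‖∑ x, (starRingEnd ℂ) (psiM x) * ((PauliString a).mulVec psiM x)‖
      ≤ (n : ℝ) ^ 3 := by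
  obtain ⟨i₀, hi₀⟩ := ha
  set pairs : Finset (Fin n × Fin n) := Finset.univ.filter (fun p => p.1 < p.2) with hpairs
  have psiM_eq : ∀ x : Fin n → Fin 2, psiM x = ∑ p ∈ pairs, Rij p.1 p.2 x := by
    intro x
    rw [hpairs, Finset.sum_filter, Fintype.sum_prod_type]
    rfl
  set T : Fin n × Fin n → Fin n × Fin n → ℂ := fun p q =>
    ∑ x, ∑ y, (starRingEnd ℂ) (Rij p.1 p.2 x) * (PauliString a x y * Rij q.1 q.2 y) with hT
  have hx : ∀ x : Fin n → Fin 2, (starRingEnd ℂ) (psiM x) * ((PauliString a).mulVec psiM x)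
      = ∑ p ∈ pairs, ∑ q ∈ pairs, ∑ y : Fin n → Fin 2,
          (starRingEnd ℂ) (Rij p.1 p.2 x) * (PauliString a x y * Rij q.1 q.2 y) := by
    intro x
    rw [psiM_eq, map_sum, Matrix.mulVec, Finset.sum_mul]
    refine Finset.sum_congr rfl fun p _ => ?_
    rw [dotProduct]
    have h1 : ∀ y : Fin n → Fin 2, PauliString a x y * psiM y
        = ∑ q ∈ pairs, PauliString a x y * Rij q.1 q.2 y := by
      intro y; rw [psiM_eq, Finset.mul_sum]
    rw [Finset.sum_congr rfl fun y _ => h1 y, Finset.sum_comm, Finset.mul_sum]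
    refine Finset.sum_congr rfl fun q _ => ?_
    rw [Finset.mul_sum]
  have Esum : (∑ x, (starRingEnd ℂ) (psiM x) * ((PauliString a).mulVec psiM x))
      = ∑ p ∈ pairs, ∑ q ∈ pairs, T p q := by
    rw [Finset.sum_congr rfl fun x _ => hx x, Finset.sum_comm]
    refine Finset.sum_congr rfl fun p _ => ?_
    rw [Finset.sum_comm]
  rw [Esum]
  -- bound each term
  have key : ∀ p ∈ pairs, ∀ q ∈ pairs, ‖T p q‖
      ≤ (if p.1 = i₀ ∨ p.2 = i₀ then (1:ℝ) else 0) + (if q.1 = i₀ ∨ q.2 = i₀ then (1:ℝ) else 0) := by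
    intro p hp q hq
    have hp' : p.1 ≠ p.2 := ne_of_lt (by simpa [hpairs] using hp)
    have hq' : q.1 ≠ q.2 := ne_of_lt (by simpa [hpairs] using hq)
    have : T p q = ∏ m, Gfac (a m) (vOf p.1 p.2 m) (vOf q.1 q.2 m) :=
      T_eq a p.1 p.2 q.1 q.2 hp' hq'
    rw [this]
    by_cases h : (p.1 = i₀ ∨ p.2 = i₀) ∨ (q.1 = i₀ ∨ q.2 = i₀)
    · have hone : ‖∏ m, Gfac (a m) (vOf p.1 p.2 m) (vOf q.1 q.2 m)‖ ≤ 1 := by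
        rw [norm_prod]
        refine Finset.prod_le_one (fun m _ => norm_nonneg _) (fun m _ => ?_)
        exact Gfac_abs_le _ _ _ (vOf_norm _ _ _) (vOf_norm _ _ _)
      refine le_trans hone ?_
      rcases h with h | h
      · simp only [if_pos h]
        have : (0:ℝ) ≤ (if q.1 = i₀ ∨ q.2 = i₀ then (1:ℝ) else 0) := by positivity
        linarith
      · simp only [if_pos h]
        have : (0:ℝ) ≤ (if p.1 = i₀ ∨ p.2 = i₀ then (1:ℝ) else 0) := by positivity
        linarith
    · push_neg at h
      obtain ⟨h1, h2⟩ := h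
      have hv1 : vOf p.1 p.2 i₀ = e0' := by
        unfold vOf
        rw [if_neg]
        rintro (h | h) <;> [exact h1.1 h.symm; exact h1.2 h.symm]
      have hv2 : vOf q.1 q.2 i₀ = e0' := by
        unfold vOf
        rw [if_neg]
        rintro (h | h) <;> [exact h2.1 h.symm; exact h2.2 h.symm]
      have : (∏ m, Gfac (a m) (vOf p.1 p.2 m) (vOf q.1 q.2 m)) = 0 := by
        refine Finset.prod_eq_zero (Finset.mem_univ i₀) ?_
        rw [hv1, hv2]
        exact Gfac_zero _ hi₀
      rw [this]
      simp [if_neg (not_or.mpr h1), if_neg (not_or.mpr h2)]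
  -- counting
  set S : ℝ := ∑ p ∈ pairs, (if p.1 = i₀ ∨ p.2 = i₀ then (1:ℝ) else 0) with hS
  have habs : ‖∑ p ∈ pairs, ∑ q ∈ pairs, T p q‖
      ≤ pairs.card * S + S * pairs.card := by
    calc ‖∑ p ∈ pairs, ∑ q ∈ pairs, T p q‖
        ≤ ∑ p ∈ pairs, ‖∑ q ∈ pairs, T p q‖ := norm_sum_le _ _
      _ ≤ ∑ p ∈ pairs, ∑ q ∈ pairs, ‖T p q‖ :=
          Finset.sum_le_sum (fun p _ => norm_sum_le _ _)
      _ ≤ ∑ p ∈ pairs, ∑ q ∈ pairs,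
            ((if p.1 = i₀ ∨ p.2 = i₀ then (1:ℝ) else 0) + (if q.1 = i₀ ∨ q.2 = i₀ then (1:ℝ) else 0)) :=
          Finset.sum_le_sum (fun p hp => Finset.sum_le_sum (fun q hq => key p hp q hq))
      _ = pairs.card * S + S * pairs.card := by
          have h1 : ∀ p : Fin n × Fin n, (∑ q ∈ pairs,
              ((if p.1 = i₀ ∨ p.2 = i₀ then (1:ℝ) else 0) + (if q.1 = i₀ ∨ q.2 = i₀ then (1:ℝ) else 0)))
              = (if p.1 = i₀ ∨ p.2 = i₀ then (1:ℝ) else 0) * pairs.card + S := by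
            intro p
            rw [Finset.sum_add_distrib, Finset.sum_const, nsmul_eq_mul, ← hS, mul_comm]
          rw [Finset.sum_congr rfl fun p _ => h1 p, Finset.sum_add_distrib, Finset.sum_const,
            nsmul_eq_mul, ← Finset.sum_mul, ← hS]
          ring
  refine le_trans habs ?_
  -- S ≤ n
  have hS0 : 0 ≤ S := Finset.sum_nonneg fun p _ => by positivity
  have hSn : S ≤ (n : ℝ) := by
    have : S = ((pairs.filter (fun p => p.1 = i₀ ∨ p.2 = i₀)).card : ℝ) := by
      rw [hS, Finset.sum_boole]
    rw [this]
    have hcard : (pairs.filter (fun p => p.1 = i₀ ∨ p.2 = i₀)).card ≤ n := by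
      have := Finset.card_le_card_of_injOn (s := pairs.filter (fun p => p.1 = i₀ ∨ p.2 = i₀)) (f := fun p : Fin n × Fin n => if p.1 = i₀ then p.2 else p.1)
        (t := (Finset.univ : Finset (Fin n)))
        (fun p _ => Finset.mem_univ _) ?_
      · simpa using this
      · intro p hp q hq hfpq
        simp only [Finset.coe_filter, Set.mem_setOf_eq, hpairs, Finset.mem_filter,
          Finset.mem_univ, true_and] at hp hq
        obtain ⟨hplt, hpc⟩ := hp
        obtain ⟨hqlt, hqc⟩ := hq
        simp only at hfpq
        rcases hpc with hp1 | hp2 <;> rcases hqc with hq1 | hq2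
        · rw [if_pos hp1, if_pos hq1] at hfpq
          exact Prod.ext (hp1.trans hq1.symm) hfpq
        · rw [if_pos hp1] at hfpq
          by_cases hq1 : q.1 = i₀
          · rw [if_pos hq1] at hfpq; exact Prod.ext (hp1.trans hq1.symm) hfpq
          · rw [if_neg hq1] at hfpq
            exfalso
            rw [hp1] at hplt; rw [hq2] at hqlt; rw [hfpq] at hplt
            exact absurd (hplt.trans hqlt) (lt_irrefl _)
        · by_cases hp1 : p.1 = i₀
          · rw [if_pos hp1, if_pos hq1] at hfpq; exact Prod.ext (hp1.trans hq1.symm) hfpq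
          · rw [if_neg hp1, if_pos hq1] at hfpq
            exfalso
            rw [hp2] at hplt; rw [hq1] at hqlt; rw [← hfpq] at hqlt
            exact absurd (hplt.trans hqlt) (lt_irrefl _)
        · by_cases hp1 : p.1 = i₀
          · by_cases hq1 : q.1 = i₀
            · rw [if_pos hp1, if_pos hq1] at hfpq; exact Prod.ext (hp1.trans hq1.symm) hfpq
            · rw [if_pos hp1, if_neg hq1] at hfpq
              exfalso
              rw [hp1] at hplt; rw [hq2] at hqlt; rw [hfpq] at hplt
              exact absurd (hplt.trans hqlt) (lt_irrefl _)
          · by_cases hq1 : q.1 = i₀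
            · rw [if_neg hp1, if_pos hq1] at hfpq
              exfalso
              rw [hp2] at hplt; rw [hq1] at hqlt; rw [← hfpq] at hqlt
              exact absurd (hplt.trans hqlt) (lt_irrefl _)
            · rw [if_neg hp1, if_neg hq1] at hfpq
              exact Prod.ext hfpq (hp2.trans hq2.symm)
    exact_mod_cast hcard
  -- 2 * pairs.card + n = n * n
  have hcardpairs : pairs.card + pairs.card + n = n * n := by
    set B : Finset (Fin n × Fin n) := Finset.univ.filter (fun p => p.2 < p.1) with hB
    have h1 : pairs.card = B.card := by
      refine Finset.card_bij (fun p _ => p.swap) ?_ ?_ ?_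
      · intro p hp
        simp only [hpairs, Finset.mem_filter, Finset.mem_univ, true_and] at hp
        simp [hB, hp]
      · intro p hp q hq h
        exact Prod.swap_injective h
      · intro q hq
        simp only [hB, Finset.mem_filter, Finset.mem_univ, true_and] at hq
        exact ⟨q.swap, by simp [hpairs, hq], Prod.swap_swap q⟩
    have hdisj : Disjoint pairs B := by
      rw [Finset.disjoint_left]
      intro p hp hpB
      simp only [hpairs, Finset.mem_filter, Finset.mem_univ, true_and] at hp
      simp only [hB, Finset.mem_filter, Finset.mem_univ, true_and] at hpB
      exact absurd (hp.trans hpB) (lt_irrefl _)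
    have hunion : pairs ∪ B = Finset.univ.filter (fun p : Fin n × Fin n => ¬ p.1 = p.2) := by
      ext p
      simp only [Finset.mem_union, hpairs, hB, Finset.mem_filter, Finset.mem_univ, true_and]
      constructor
      · rintro (h | h) <;> [exact ne_of_lt h; exact (ne_of_lt h).symm]
      · intro h
        exact lt_or_gt_of_ne h
    have h2 : pairs.card + B.card = (Finset.univ.filter (fun p : Fin n × Fin n => ¬ p.1 = p.2)).card := by
      rw [← hunion, Finset.card_union_of_disjoint hdisj]
    have h3 : (Finset.univ.filter (fun p : Fin n × Fin n => p.1 = p.2)).card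
        + (Finset.univ.filter (fun p : Fin n × Fin n => ¬ p.1 = p.2)).card
        = (Finset.univ : Finset (Fin n × Fin n)).card :=
      Finset.card_filter_add_card_filter_not _
    have h4 : (Finset.univ.filter (fun p : Fin n × Fin n => p.1 = p.2)).card = n := by
      have : (Finset.univ.filter (fun p : Fin n × Fin n => p.1 = p.2))
          = Finset.univ.image (fun i : Fin n => (i, i)) := by
        ext p
        simp only [Finset.mem_filter, Finset.mem_univ, true_and, Finset.mem_image]
        constructor
        · intro h; exact ⟨p.1, by rw [Prod.ext_iff]; exact ⟨rfl, h⟩⟩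
        · rintro ⟨i, rfl⟩; rfl
      rw [this, Finset.card_image_of_injective _ (fun i j h => (Prod.ext_iff.mp h).1)]
      simp
    have h5 : (Finset.univ : Finset (Fin n × Fin n)).card = n * n := by
      simp [Finset.card_univ]
    omega
  have hC : ((pairs.card : ℝ)) + pairs.card + n = n * n := by exact_mod_cast hcardpairs
  have hC0 : (0:ℝ) ≤ (pairs.card : ℝ) := Nat.cast_nonneg _
  have hn' : (1:ℝ) ≤ (n:ℝ) := by exact_mod_cast hn
  nlinarith [mul_le_mul_of_nonneg_left hSn hC0]
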